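/- Sterbenz-type exactness for FPANs (Lemma SETZ-EN0 core): let x and y be nonzero precision-p binary floating-point numbers with trailing exponents f_x, f_y (place value of the last nonzero mantissa bit) and exponents e_x, e_y. If f_x > e_y (the mantissas do not overlap, x strictly above y) and e_x < f_y + p (the combined span fits in p bits) and x, y have the same sign, then x + y is exactly representable in precision p: the sum s = x + y is a floating-point number with exponent e_s = e_x and trailing exponent f_s = f_y, and the rounding error of x ⊕ y is zero. -/

import Mathlib

/-- t is representable in precision-p binary floating-point arithmetic. -/
def FpRep (p : ℕ) (t : ℝ) : Prop :=
  ∃ (m g : ℤ), |m| < (2 : ℤ) ^ p ∧ t = (m : ℝ) * (2 : ℝ) ^ g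

/-- R rounds to a nearest precision-p floating-point number. -/
def IsRNE (p : ℕ) (R : ℝ → ℝ) : Prop :=
  ∀ t : ℝ, FpRep p (R t) ∧ ∀ z : ℝ, FpRep p z → |t - R t| ≤ |t - z|

/-- x is a nonzero precision-p binary float with exponent e and trailing
exponent f: x = M·2^f with M odd, 2^e ≤ |x| < 2^(e+1), and e - f ≤ p - 1. -/
def FpTrail (p : ℕ) (e f : ℤ) (x : ℝ) : Prop :=
  ∃ M : ℤ, Odd M ∧ x = (M : ℝ) * (2 : ℝ) ^ f ∧
    (2 : ℝ) ^ e ≤ |x| ∧ |x| < (2 : ℝ) ^ (e + 1) ∧ e - f ≤ (p : ℤ) - 1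

/-- Sterbenz-type exactness: if f_x > e_y and e_x < f_y + p and x, y have the
same sign, then x + y is exactly representable with exponent e_x and trailing
exponent f_y, and the rounding error of x ⊕ y is zero. -/
theorem exact_nonoverlapping_sum (p : ℕ) (hp : 1 ≤ p) (R : ℝ → ℝ) (hR : IsRNE p R)
    (x y : ℝ) (ex fx ey fy : ℤ)
    (hx : FpTrail p ex fx x) (hy : FpTrail p ey fy y)
    (hsign : 0 < x * y) (hno : fx > ey) (hspan : ex < fy + (p : ℤ)) :
    (∃ N : ℤ, Odd N ∧ x + y = (N : ℝ) * (2 : ℝ) ^ fy) ∧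
      (2 : ℝ) ^ ex ≤ |x + y| ∧ |x + y| < (2 : ℝ) ^ (ex + 1) ∧
      ex - fy ≤ (p : ℤ) - 1 ∧
      R (x + y) = x + y := by
  obtain ⟨Mx, hMxodd, hxeq, hxlo, hxhi, hxp⟩ := hx
  obtain ⟨My, hMyodd, hyeq, hylo, hyhi, hyp⟩ := hy
  have two_pos : (0:ℝ) < 2 := by norm_num
  have one_lt : (1:ℝ) < 2 := by norm_num
  -- |My| ≥ 1, |Mx| ≥ 1
  have hMy1 : (1:ℤ) ≤ |My| := by
    rcases eq_or_ne My 0 with h | h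
    · simp [h] at hMyodd
    · exact Int.one_le_abs h
  have hMx1 : (1:ℤ) ≤ |Mx| := by
    rcases eq_or_ne Mx 0 with h | h
    · simp [h] at hMxodd
    · exact Int.one_le_abs h
  have habsx : |x| = (|Mx| : ℝ) * (2:ℝ)^fx := by
    rw [hxeq, abs_mul, abs_of_pos (zpow_pos two_pos fx)]
  have habsy : |y| = (|My| : ℝ) * (2:ℝ)^fy := by
    rw [hyeq, abs_mul, abs_of_pos (zpow_pos two_pos fy)]
  -- fy ≤ ey
  have hfyey : fy ≤ ey := by
    have h1 : (2:ℝ)^fy ≤ |y| := by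
      rw [habsy]
      nlinarith [zpow_pos two_pos fy, (by exact_mod_cast hMy1 : (1:ℝ) ≤ (|My|:ℝ))]
    have h2 : (2:ℝ)^fy < (2:ℝ)^(ey+1) := lt_of_le_of_lt h1 hyhi
    have := (zpow_lt_zpow_iff_right₀ one_lt).mp h2
    omega
  have hfxex : fx ≤ ex := by
    have h1 : (2:ℝ)^fx ≤ |x| := by
      rw [habsx]
      nlinarith [zpow_pos two_pos fx, (by exact_mod_cast hMx1 : (1:ℝ) ≤ (|Mx|:ℝ))]
    have h2 : (2:ℝ)^fx < (2:ℝ)^(ex+1) := lt_of_le_of_lt h1 hxhi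
    have := (zpow_lt_zpow_iff_right₀ one_lt).mp h2
    omega
  -- sum representation
  set k : ℕ := (fx - fy).toNat with hkdef
  have hk : (k:ℤ) = fx - fy := Int.toNat_of_nonneg (by omega)
  have hk1 : 1 ≤ k := by omega
  set N : ℤ := Mx * 2^k + My with hNdef
  have hsumeq : x + y = (N : ℝ) * (2:ℝ)^fy := by
    have h2k : ((2:ℤ)^k : ℝ) * (2:ℝ)^fy = (2:ℝ)^fx := by
      push_cast
      rw [← zpow_natCast (2:ℝ) k, ← zpow_add₀ (by norm_num : (2:ℝ) ≠ 0), hk]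
      ring_nf
    rw [hxeq, hyeq, hNdef]
    push_cast
    rw [add_mul]
    congr 1
    rw [mul_assoc]
    rw [show ((2:ℝ)^k) * (2:ℝ)^fy = (2:ℝ)^fx by exact_mod_cast h2k]
  have hNodd : Odd N := by
    have : Even (Mx * 2^k) := by
      have h2 : Even ((2:ℤ)^k) := Int.even_pow.mpr ⟨even_two, by omega⟩
      exact h2.mul_left Mx
    exact this.add_odd hMyodd
  -- |x+y| = |x| + |y|
  have habssum : |x + y| = |x| + |y| := by
    rcases mul_pos_iff.mp hsign with ⟨hx0, hy0⟩ | ⟨hx0, hy0⟩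
    · rw [abs_of_pos hx0, abs_of_pos hy0, abs_of_pos (by linarith)]
    · rw [abs_of_neg hx0, abs_of_neg hy0, abs_of_neg (by linarith)]; ring
  -- lower bound
  have hlow : (2:ℝ)^ex ≤ |x + y| := by
    rw [habssum]; have := abs_nonneg y; linarith
  -- |y| < 2^fx
  have hyfx : |y| < (2:ℝ)^fx := by
    calc |y| < (2:ℝ)^(ey+1) := hyhi
    _ ≤ (2:ℝ)^fx := zpow_le_zpow_right₀ (by norm_num) (by omega)
  -- |x| ≤ 2^(ex+1) - 2^fx
  set m : ℕ := (ex + 1 - fx).toNat with hmdef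
  have hm : (m:ℤ) = ex + 1 - fx := Int.toNat_of_nonneg (by omega)
  have h2m : ((2:ℤ)^m : ℝ) * (2:ℝ)^fx = (2:ℝ)^(ex+1) := by
    push_cast
    rw [← zpow_natCast (2:ℝ) m, ← zpow_add₀ (by norm_num : (2:ℝ) ≠ 0), hm]
    ring_nf
  have hMxm : |Mx| < 2^m := by
    have hr : (|Mx| : ℝ) * (2:ℝ)^fx < ((2:ℤ)^m : ℝ) * (2:ℝ)^fx := by
      rw [h2m, ← habsx]; exact hxhi
    have := (mul_lt_mul_iff_of_pos_right (zpow_pos two_pos fx)).mp hr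
    exact_mod_cast this
  have hxub : |x| ≤ (2:ℝ)^(ex+1) - (2:ℝ)^fx := by
    have : |Mx| ≤ 2^m - 1 := by omega
    have hr : (|Mx| : ℝ) ≤ ((2:ℤ)^m : ℝ) - 1 := by exact_mod_cast this
    rw [habsx]
    nlinarith [zpow_pos two_pos fx, h2m]
  have hhigh : |x + y| < (2:ℝ)^(ex+1) := by
    rw [habssum]; linarith
  -- span
  have hspan' : ex - fy ≤ (p:ℤ) - 1 := by omega
  -- representability
  have hNabs : |N| < (2:ℤ)^p := by
    have habsN : |x + y| = (|N| : ℝ) * (2:ℝ)^fy := by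
      rw [hsumeq, abs_mul, abs_of_pos (zpow_pos two_pos fy)]
    have hub : (2:ℝ)^(ex+1) ≤ ((2:ℤ)^p : ℝ) * (2:ℝ)^fy := by
      push_cast
      rw [← zpow_natCast (2:ℝ) p, ← zpow_add₀ (by norm_num : (2:ℝ) ≠ 0)]
      exact zpow_le_zpow_right₀ (by norm_num) (by omega)
    have hr : (|N| : ℝ) * (2:ℝ)^fy < ((2:ℤ)^p : ℝ) * (2:ℝ)^fy := by
      rw [← habsN]; exact lt_of_lt_of_le hhigh hub
    have := (mul_lt_mul_iff_of_pos_right (zpow_pos two_pos fy)).mp hr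
    exact_mod_cast this
  have hrep : FpRep p (x + y) := ⟨N, fy, hNabs, hsumeq⟩
  obtain ⟨_, hmin⟩ := hR (x + y)
  have hle := hmin (x + y) hrep
  simp only [sub_self, abs_zero] at hle
  have : |x + y - R (x + y)| = 0 := le_antisymm hle (abs_nonneg _)
  have hReq : R (x + y) = x + y := by
    have := abs_eq_zero.mp this; linarith
  exact ⟨⟨N, hNodd, hsumeq⟩, hlow, hhigh, hspan', hReq⟩
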